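/- The relation N_2 = −C_2/2 + L^3/2 for local P^2 (eq. (2.7), obtained from the WDVV-type relation for the series 𝕊_i): In ℚ[[q]] define I_1 = 3·Σ_{d≥1}(−1)^d (3d−1)!/(d!)^3 q^d, I_{2,0} = 3·Σ_{d≥1}(−1)^d (3d−1)!/(d!)^3 (3Har[3d−1] − 3Har[d]) q^d, I_{2,1} = 3·Σ_{d≥1}(−1)^d (3d−1)!/(d!)^3 Har[d] q^d with Har[m] = Σ_{k=1}^{m} 1/k, C_1 = 1 + 𝖣I_1, C_2 = 1 + 𝖣((I_1 + 𝖣I_{2,0})/C_1), and N_2 = 𝖣((𝖣I_{2,1})/C_1), where 𝖣 = q·d/dq. Then 2·N_2 = (1+27q)^{−1} − C_2 in ℚ[[q]], i.e. N_2 = −(1/2)C_2 + (1/2)L^3 where L^3 = (1+27q)^{−1}. -/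

import Mathlib

/-!
STATEMENT 9: The relation N₂ = −C₂/2 + L³/2 for local P², i.e.
2·N₂ = (1+27q)⁻¹ − C₂ in ℚ[[q]].
-/

noncomputable section

/-- The derivation `𝖣 = q·d/dq` on `ℚ[[q]]`. -/
def Dq (G : PowerSeries ℚ) : PowerSeries ℚ :=
  PowerSeries.mk fun d => (d : ℚ) * PowerSeries.coeff d G

/-- Harmonic number `Har[m] = Σ_{k=1}^m 1/k`. -/
def Har (m : ℕ) : ℚ := ∑ k ∈ Finset.range m, ((k : ℚ) + 1)⁻¹

/-- `I₁ = 3·Σ_{d≥1} (−1)^d (3d−1)!/(d!)^3 q^d`. -/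
def I₁ : PowerSeries ℚ :=
  PowerSeries.mk fun d => if d = 0 then 0 else
    3 * (-1 : ℚ) ^ d * ((3 * d - 1).factorial : ℚ) / ((d.factorial : ℚ)) ^ 3

/-- `I₂₀ = 3·Σ_{d≥1} (−1)^d (3d−1)!/(d!)^3 (3Har[3d−1] − 3Har[d]) q^d`. -/
def I₂₀ : PowerSeries ℚ :=
  PowerSeries.mk fun d => if d = 0 then 0 else
    3 * (-1 : ℚ) ^ d * ((3 * d - 1).factorial : ℚ) / ((d.factorial : ℚ)) ^ 3
      * (3 * Har (3 * d - 1) - 3 * Har d)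

/-- `I₂₁ = 3·Σ_{d≥1} (−1)^d (3d−1)!/(d!)^3 Har[d] q^d`. -/
def I₂₁ : PowerSeries ℚ :=
  PowerSeries.mk fun d => if d = 0 then 0 else
    3 * (-1 : ℚ) ^ d * ((3 * d - 1).factorial : ℚ) / ((d.factorial : ℚ)) ^ 3 * Har d

/-- `C₁ = 1 + 𝖣I₁`. -/
def C₁ : PowerSeries ℚ := 1 + Dq I₁

/-- `C₂ = 1 + 𝖣((I₁ + 𝖣I₂₀)/C₁)`. -/
def C₂ : PowerSeries ℚ := 1 + Dq ((I₁ + Dq I₂₀) * C₁⁻¹)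

/-- `N₂ = 𝖣((𝖣I₂₁)/C₁)`. -/
def N₂ : PowerSeries ℚ := Dq (Dq I₂₁ * C₁⁻¹)

open PowerSeries



lemma coeff_Dq (n : ℕ) (G : PowerSeries ℚ) : coeff n (Dq G) = n * coeff n G :=
  coeff_mk _ _

lemma Dq_add (f g : PowerSeries ℚ) : Dq (f + g) = Dq f + Dq g := by
  ext n; simp [coeff_Dq, mul_add]

lemma Dq_mul (f g : PowerSeries ℚ) : Dq (f * g) = Dq f * g + f * Dq g := by
  ext n
  simp only [coeff_Dq, map_add, PowerSeries.coeff_mul, Finset.mul_sum]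
  rw [← Finset.sum_add_distrib]
  refine Finset.sum_congr rfl fun p hp => ?_
  have h := (Finset.HasAntidiagonal.mem_antidiagonal).mp hp
  have : ((n : ℚ)) = (p.1 : ℚ) + p.2 := by exact_mod_cast congrArg (Nat.cast (R := ℚ)) h.symm
  rw [this]; ring

lemma Dq_neg (f : PowerSeries ℚ) : Dq (-f) = -Dq f := by
  ext n; simp [coeff_Dq]

lemma Dq_one : Dq 1 = 0 := by
  ext n
  rw [coeff_Dq, PowerSeries.coeff_one]
  split <;> simp_all

lemma Dq_X : Dq X = (X : PowerSeries ℚ) := by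
  ext n; simp [coeff_Dq, PowerSeries.coeff_X]
  rcases n with _ | n
  · simp
  · by_cases h : n = 0 <;> simp [h]

lemma coeff_27_mul (f : PowerSeries ℚ) (k : ℕ) :
    coeff k ((27 : PowerSeries ℚ) * f) = 27 * coeff k f := by
  rw [← map_ofNat (C (R := ℚ)) 27, coeff_C_mul]

lemma coeff_6_mul (f : PowerSeries ℚ) (k : ℕ) :
    coeff k ((6 : PowerSeries ℚ) * f) = 6 * coeff k f := by
  rw [← map_ofNat (C (R := ℚ)) 6, coeff_C_mul]

lemma coeff_54_mul (f : PowerSeries ℚ) (k : ℕ) :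
    coeff k ((54 : PowerSeries ℚ) * f) = 54 * coeff k f := by
  rw [← map_ofNat (C (R := ℚ)) 54, coeff_C_mul]

lemma Dq_ofNat (n : ℕ) [n.AtLeastTwo] : Dq (OfNat.ofNat n : PowerSeries ℚ) = 0 := by
  ext k
  rw [coeff_Dq, ← map_ofNat (C (R := ℚ)) n, PowerSeries.coeff_C]
  split <;> simp_all

lemma coeff_zero_X_mul (f : PowerSeries ℚ) : coeff 0 (X * f) = 0 := by
  simp [PowerSeries.coeff_zero_eq_constantCoeff, map_mul]


def aa (d : ℕ) : ℚ := if d = 0 then 0 else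
    3 * (-1 : ℚ) ^ d * ((3 * d - 1).factorial : ℚ) / ((d.factorial : ℚ)) ^ 3

lemma Har_succ (m : ℕ) : Har (m + 1) = Har m + ((m : ℚ) + 1)⁻¹ := by
  simp [Har, Finset.sum_range_succ]

lemma aa_rec (d : ℕ) (hd : 1 ≤ d) :
    ((d : ℚ) + 1) ^ 3 * aa (d + 1) = -(3 * d * (3 * d + 1) * (3 * d + 2)) * aa d := by
  have h1 : 3 * (d + 1) - 1 = (3 * d + 1) + 1 := by omega
  have h2 : 3 * d - 1 + 1 = 3 * d := by omega
  have e1 : ((3 * d + 1) + 1).factorial = ((3*d:ℕ)+2) * ((3*d:ℕ)+1) * (3*d:ℕ) * (3 * d - 1).factorial := by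
    rw [Nat.factorial_succ, Nat.factorial_succ, ← h2, Nat.factorial_succ, h2]; ring
  have e2 : (d + 1).factorial = (d + 1) * d.factorial := Nat.factorial_succ d
  rw [aa, aa, if_neg (by omega : ¬ d + 1 = 0), if_neg (by omega : ¬ d = 0), h1, e1, e2]
  have hfne : ((d.factorial : ℚ)) ≠ 0 := by exact_mod_cast d.factorial_pos.ne'
  have hdne : ((d : ℚ) + 1) ≠ 0 := by positivity
  push_cast
  rw [pow_succ]
  field_simp
  ring

lemma key1 (d : ℕ) (hd : 1 ≤ d) :
    ((d:ℚ)+1) * (((d:ℚ)+1) * (((d:ℚ)+1) * aa (d+1))) + 27 * ((d:ℚ) * ((d:ℚ) * ((d:ℚ) * aa d)))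
      + 27 * ((d:ℚ) * ((d:ℚ) * aa d)) + 6 * ((d:ℚ) * aa d) = 0 := by
  have h := aa_rec d hd
  linear_combination h

lemma key2 (d : ℕ) (hd : 1 ≤ d) :
    ((d:ℚ)+1)^2 * (aa (d+1) * (1 + ((d:ℚ)+1)*(3*Har (3*(d+1)-1) - 3*Har (d+1)) + 2*((d:ℚ)+1)*Har (d+1)))
      + (27*(d:ℚ)^2 + 27*(d:ℚ) + 6) * (aa d * (1 + (d:ℚ)*(3*Har (3*d-1) - 3*Har d) + 2*(d:ℚ)*Har d))
      + 54*(d:ℚ)^2 * aa d + 27*(d:ℚ) * aa d = 0 := by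
  have h2 : (3 * d - 1 : ℕ) + 1 = 3 * d := by omega
  have hcast : ((3 * d - 1 : ℕ) : ℚ) = 3 * (d:ℚ) - 1 := by
    have := congrArg (Nat.cast (R := ℚ)) h2; push_cast at this; linarith
  have hH3 : Har (3*(d+1)-1) = Har (3*d-1) + (3*(d:ℚ))⁻¹ + (3*(d:ℚ)+1)⁻¹ + (3*(d:ℚ)+2)⁻¹ := by
    rw [show 3*(d+1)-1 = (3*d-1) + 1 + 1 + 1 from by omega, Har_succ, Har_succ, Har_succ]
    push_cast [hcast]; ring_nf
  have hH1 : Har (d+1) = Har d + ((d:ℚ)+1)⁻¹ := Har_succ d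
  have hdq : (0:ℚ) < (d:ℚ) := by exact_mod_cast hd
  have haval : aa (d+1) = -(3 * (d:ℚ) * (3 * (d:ℚ) + 1) * (3 * (d:ℚ) + 2)) * aa d / ((d:ℚ)+1)^3 := by
    rw [eq_div_iff (by positivity)]
    linear_combination aa_rec d hd
  rw [hH3, hH1, haval]
  have n1 : (3*(d:ℚ)) ≠ 0 := by positivity
  have n2 : (3*(d:ℚ)+1) ≠ 0 := by positivity
  have n3 : (3*(d:ℚ)+2) ≠ 0 := by positivity
  have n4 : ((d:ℚ)+1) ≠ 0 := by positivity
  field_simp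
  ring

lemma constantCoeff_Dq (G : PowerSeries ℚ) : constantCoeff (Dq G) = 0 := by
  rw [← PowerSeries.coeff_zero_eq_constantCoeff, coeff_Dq]; simp





def WW : PowerSeries ℚ := (I₁ + Dq I₂₀) + (Dq I₂₁ + Dq I₂₁)

def Lg : PowerSeries ℚ := PowerSeries.mk fun d => if d = 0 then 0 else -(-27 : ℚ)^d / d

lemma aa_one : aa 1 = -6 := by norm_num [aa, Nat.factorial]

lemma coeff_C₁ (d : ℕ) : coeff d C₁ = if d = 0 then 1 else (d:ℚ) * aa d := by
  rw [C₁, map_add, coeff_Dq, PowerSeries.coeff_one]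
  rcases d with _ | d
  · simp [aa]
  · simp only [Nat.succ_ne_zero, if_false, I₁, coeff_mk, aa, zero_add]

lemma coeff_WW (d : ℕ) :
    coeff d WW = aa d * (1 + (d:ℚ)*(3*Har (3*d-1) - 3*Har d) + 2*(d:ℚ)*Har d) := by
  rw [WW]
  simp only [map_add, coeff_Dq]
  rcases d with _ | d
  · simp [I₁, aa, Har]
  · simp only [I₁, I₂₀, I₂₁, coeff_mk, Nat.succ_ne_zero, if_false, aa]
    ring

lemma constC₁ : constantCoeff C₁ = 1 := by
  have := coeff_C₁ 0
  simpa [PowerSeries.coeff_zero_eq_constantCoeff] using this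

lemma PF1 : (1 + 27*X) * Dq (Dq C₁) + 27*(X*Dq C₁) + 6*(X*C₁) = 0 := by
  have hre : (1 + 27*X) * Dq (Dq C₁) + 27*(X*Dq C₁) + 6*(X*C₁)
      = Dq (Dq C₁) + 27*(X*Dq (Dq C₁)) + (27*(X*Dq C₁) + 6*(X*C₁)) := by ring
  rw [hre]
  ext n
  rcases n with _ | d
  · simp [coeff_27_mul, coeff_6_mul, coeff_54_mul, coeff_zero_X_mul, coeff_Dq, constantCoeff_Dq]
  · simp only [map_add, coeff_27_mul, coeff_6_mul, coeff_54_mul, PowerSeries.coeff_succ_X_mul, coeff_Dq,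
      coeff_C₁, map_zero]
    rcases d with _ | d
    · norm_num [aa_one]
    · rw [if_neg (Nat.succ_ne_zero d), if_neg (Nat.succ_ne_zero _)]
      have hk := key1 (d+1) (by omega)
      push_cast at hk ⊢
      linear_combination hk

lemma PF2 : (1 + 27*X) * Dq (Dq WW) + 27*(X*Dq WW) + 6*(X*WW)
    + (54*(X*Dq C₁) + 27*(X*C₁)) = 0 := by
  have hre : (1 + 27*X) * Dq (Dq WW) + 27*(X*Dq WW) + 6*(X*WW) + (54*(X*Dq C₁) + 27*(X*C₁))
      = Dq (Dq WW) + 27*(X*Dq (Dq WW)) + (27*(X*Dq WW) + (6*(X*WW)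
        + (54*(X*Dq C₁) + 27*(X*C₁)))) := by ring
  rw [hre]
  ext n
  rcases n with _ | d
  · simp [coeff_27_mul, coeff_6_mul, coeff_54_mul, coeff_zero_X_mul, coeff_Dq, constantCoeff_Dq]
  · simp only [map_add, coeff_27_mul, coeff_6_mul, coeff_54_mul, PowerSeries.coeff_succ_X_mul, coeff_Dq,
      coeff_WW, coeff_C₁, map_zero]
    rcases d with _ | d
    · norm_num [aa, Nat.factorial, Har, Finset.sum_range_succ, Finset.sum_range_zero]
    · have hk := key2 (d+1) (by omega)
      push_cast at hk ⊢
      linear_combination hk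

lemma LgODE : (1 + 27*X) * Dq Lg = 27 * X := by
  have hre : (1 + 27*X) * Dq Lg = Dq Lg + 27*(X*Dq Lg) := by ring
  rw [hre]
  ext n
  rcases n with _ | d
  · simp [coeff_27_mul, coeff_6_mul, coeff_54_mul, coeff_zero_X_mul, coeff_Dq, constantCoeff_Dq]
  · simp only [map_add, coeff_27_mul, coeff_6_mul, coeff_54_mul, PowerSeries.coeff_succ_X_mul, coeff_Dq,
      Lg, coeff_mk, PowerSeries.coeff_X]
    rcases d with _ | d
    · norm_num
    · rw [if_neg (Nat.succ_ne_zero d), if_neg (Nat.succ_ne_zero _),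
        if_neg (by omega : ¬ (d+1+1) = 1)]
      have h1 : ((d:ℚ)+1) ≠ 0 := by positivity
      have h2 : ((d:ℚ)+1+1) ≠ 0 := by positivity
      push_cast
      field_simp
      ring




lemma vanish (Y : PowerSeries ℚ) (h0 : coeff 0 Y = 0)
    (hode : (1+27*X) * Dq (Dq Y) + 27*(X*Dq Y) + 6*(X*Y) = 0) : Y = 0 := by
  have key : ∀ d, coeff d Y = 0 := by
    intro d
    induction d with
    | zero => exact h0
    | succ d ih =>
      have hre : (1 + 27*X) * Dq (Dq Y) + 27*(X*Dq Y) + 6*(X*Y)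
          = Dq (Dq Y) + 27*(X*Dq (Dq Y)) + (27*(X*Dq Y) + 6*(X*Y)) := by ring
      rw [hre] at hode
      have h := congrArg (coeff (d+1)) hode
      simp only [map_add, coeff_27_mul, coeff_6_mul, coeff_54_mul,
        PowerSeries.coeff_succ_X_mul, coeff_Dq, map_zero, ih, mul_zero, add_zero, zero_add] at h
      have h2 : (((d:ℚ)+1)*((d:ℚ)+1)) * coeff (d+1) Y = 0 := by
        push_cast at h; linear_combination h
      have hne : (((d:ℚ)+1)*((d:ℚ)+1)) ≠ 0 := by positivity
      exact (mul_eq_zero.mp h2).resolve_left hne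
  ext n; simpa using key n

lemma Dq_one_add : Dq (1 + 27*X : PowerSeries ℚ) = 27*X := by
  rw [Dq_add, Dq_one, Dq_mul, Dq_ofNat, Dq_X]; ring

lemma LgODE2 : (1+27*X) * Dq (Dq Lg) + 27*(X*Dq Lg) = 27*X := by
  have h := congrArg Dq LgODE
  rw [Dq_mul, Dq_one_add, Dq_mul, Dq_ofNat, Dq_X] at h
  linear_combination h

lemma WW_eq : WW = -(C₁ * Lg) := by
  have h0 : coeff 0 (WW + C₁ * Lg) = 0 := by
    rw [map_add, coeff_WW]
    simp [aa, PowerSeries.coeff_zero_eq_constantCoeff, map_mul, constC₁, Lg]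
  have hode : (1+27*X) * Dq (Dq (WW + C₁*Lg)) + 27*(X*Dq (WW + C₁*Lg))
      + 6*(X*(WW + C₁*Lg)) = 0 := by
    simp only [Dq_add, Dq_mul]
    linear_combination PF2 + Lg * PF1 + C₁ * LgODE2 + (2*Dq C₁) * LgODE
  have h := vanish _ h0 hode
  linear_combination h

theorem stmt9 : 2 * N₂ = (1 + 27 * PowerSeries.X)⁻¹ - C₂ := by
  have hC1ne : constantCoeff C₁ ≠ 0 := by rw [constC₁]; norm_num
  have hXne : constantCoeff (1+27*X : PowerSeries ℚ) ≠ 0 := by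
    simp [map_add, map_mul, constantCoeff_X]
  have hC1inv : C₁ * C₁⁻¹ = 1 := PowerSeries.mul_inv_cancel _ hC1ne
  have hXinv : ((1+27*X : PowerSeries ℚ)) * (1+27*X)⁻¹ = 1 := PowerSeries.mul_inv_cancel _ hXne
  have hU : WW * C₁⁻¹ = -Lg := by
    rw [WW_eq]
    calc -(C₁*Lg) * C₁⁻¹ = -((C₁*C₁⁻¹)*Lg) := by ring
    _ = -Lg := by rw [hC1inv]; ring
  have hsplit : WW * C₁⁻¹ = (I₁ + Dq I₂₀) * C₁⁻¹ + (Dq I₂₁ * C₁⁻¹ + Dq I₂₁ * C₁⁻¹) := by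
    rw [WW]; ring
  have hDU : Dq ((I₁ + Dq I₂₀) * C₁⁻¹) + (Dq (Dq I₂₁ * C₁⁻¹) + Dq (Dq I₂₁ * C₁⁻¹))
      = - Dq Lg := by
    rw [← Dq_add, ← Dq_add, ← hsplit, hU, Dq_neg]
  have hDLg : Dq Lg = 27*X*(1+27*X)⁻¹ := by
    calc Dq Lg = Dq Lg * ((1+27*X)*(1+27*X)⁻¹) := by rw [hXinv]; ring
    _ = 27*X*(1+27*X)⁻¹ := by rw [show Dq Lg * ((1+27*X)*(1+27*X)⁻¹)
          = ((1+27*X) * Dq Lg) * (1+27*X)⁻¹ from by ring, LgODE]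
  rw [C₂, N₂]
  linear_combination hDU - hDLg - hXinv


end
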